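/- Let Φ : I → ℝ be a convex function on an interval I of positive real numbers, let T, V be bounded linear invertible operators on a complex Hilbert space H, and let 0 < m < M with [m², M²] contained in the interior of I and m‖Tx‖ ≤ ‖Vx‖ ≤ M‖Tx‖ for all x ∈ H. Then for every subgradient selection φ of Φ, every x ∈ H with x ≠ 0, and every y ∈ H, writing r := ‖Vx‖²/‖Tx‖², one has ⟨⊙_Φ(V,T)y, y⟩ ≥ Φ(r)‖Ty‖² + φ(r)(‖Vy‖² − r‖Ty‖²). -/

import Mathlib

variable {H : Type*} [NormedAddCommGroup H] [InnerProductSpace ℂ H] [CompleteSpace H]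

/-- `X = |VT⁻¹|² = (T*)⁻¹ V* V T⁻¹`. -/
noncomputable def qX (V T : (H →L[ℂ] H)ˣ) : H →L[ℂ] H :=
  star (↑(T⁻¹) : H →L[ℂ] H) * (star (V : H →L[ℂ] H) * (V : H →L[ℂ] H)) * (↑(T⁻¹) : H →L[ℂ] H)

/-- The quadratic operator perspective `⊙_Φ(V,T) = T* Φ(X) T`. -/
noncomputable def qPersp (Φ : ℝ → ℝ) (V T : (H →L[ℂ] H)ˣ) : H →L[ℂ] H :=
  star (T : H →L[ℂ] H) * cfc Φ (qX V T) * (T : H →L[ℂ] H)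

/-- `|T|² = T*T`. -/
noncomputable def modSq (T : (H →L[ℂ] H)ˣ) : H →L[ℂ] H :=
  star (T : H →L[ℂ] H) * (T : H →L[ℂ] H)

theorem stmt5 (I : Set ℝ) (hIpos : I ⊆ Set.Ioi 0)
    (Φ : ℝ → ℝ) (hΦ : ConvexOn ℝ I Φ)
    (T V : (H →L[ℂ] H)ˣ) (m M : ℝ) (hm : 0 < m) (hmM : m < M)
    (hsub : Set.Icc (m ^ 2) (M ^ 2) ⊆ interior I)
    (hTV : ∀ x : H, m * ‖(T : H →L[ℂ] H) x‖ ≤ ‖(V : H →L[ℂ] H) x‖ ∧ ‖(V : H →L[ℂ] H) x‖ ≤ M * ‖(T : H →L[ℂ] H) x‖)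
    (φ : ℝ → ℝ) (hφ : ∀ a ∈ interior I, ∀ t ∈ I, Φ a + (t - a) * φ a ≤ Φ t)
    (x : H) (hx : x ≠ 0) (r : ℝ) (hr : r = ‖(V : H →L[ℂ] H) x‖ ^ 2 / ‖(T : H →L[ℂ] H) x‖ ^ 2) (y : H) :
    Φ r * ‖(T : H →L[ℂ] H) y‖ ^ 2 + φ r * (‖(V : H →L[ℂ] H) y‖ ^ 2 - r * ‖(T : H →L[ℂ] H) y‖ ^ 2) ≤
      (inner ℂ ((qPersp Φ V T) y) y : ℂ).re := by
  set A : H →L[ℂ] H := (V : H →L[ℂ] H) * (↑(T⁻¹) : H →L[ℂ] H) with hA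
  have hXA : qX V T = star A * A := by
    simp [qX, hA, star_mul, mul_assoc]
  set X : H →L[ℂ] H := qX V T with hX
  -- A applied
  have hAapp : ∀ w : H, A w = (V : H →L[ℂ] H) ((↑(T⁻¹) : H →L[ℂ] H) w) := fun w => rfl
  have hTinv : ∀ w : H, (T : H →L[ℂ] H) ((↑(T⁻¹) : H →L[ℂ] H) w) = w := by
    intro w
    exact DFunLike.congr_fun T.mul_inv w
  have hAnorm : ∀ w : H, m * ‖w‖ ≤ ‖A w‖ ∧ ‖A w‖ ≤ M * ‖w‖ := by
    intro w
    have h := hTV ((↑(T⁻¹) : H →L[ℂ] H) w)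
    rw [hTinv w] at h
    exact h
  -- inner of X
  have hXinner : ∀ w : H, (inner ℂ (X w) w : ℂ) = (‖A w‖ : ℂ) ^ 2 := by
    intro w
    rw [hXA]
    show (inner ℂ ((star A) (A w)) w : ℂ) = _
    rw [ContinuousLinearMap.star_eq_adjoint, ContinuousLinearMap.adjoint_inner_left,
      inner_self_eq_norm_sq_to_K]
    norm_cast
  have hXsa : IsSelfAdjoint X := by
    rw [hXA]; exact IsSelfAdjoint.star_mul_self A
  -- order bounds
  have hlow : algebraMap ℝ (H →L[ℂ] H) (m ^ 2) ≤ X := by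
    rw [ContinuousLinearMap.le_def]
    constructor
    · rw [Algebra.algebraMap_eq_smul_one]
      exact (hXsa.sub (IsSelfAdjoint.smul (star_trivial _) (IsSelfAdjoint.one _))).isSymmetric
    · intro w
      have h1 : m * ‖w‖ ≤ ‖A w‖ := (hAnorm w).1
      have h2 : m ^ 2 * ‖w‖ ^ 2 ≤ ‖A w‖ ^ 2 := by
        have := mul_self_le_mul_self (by positivity) h1
        nlinarith [norm_nonneg w, norm_nonneg (A w)]
      show 0 ≤ (inner ℂ ((X - algebraMap ℝ (H →L[ℂ] H) (m ^ 2)) w) w : ℂ).re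
      rw [ContinuousLinearMap.sub_apply, inner_sub_left, Algebra.algebraMap_eq_smul_one]
      rw [hXinner w]
      have : (inner ℂ (((m ^ 2 : ℝ) • (1 : H →L[ℂ] H)) w) w : ℂ) = (m ^ 2 : ℝ) * (‖w‖ : ℂ) ^ 2 := by
        simp only [ContinuousLinearMap.smul_apply, ContinuousLinearMap.one_apply]
        rw [RCLike.real_smul_eq_coe_smul (K := ℂ), inner_smul_left, inner_self_eq_norm_sq_to_K]
        simp [Complex.real_smul]
      rw [this]
      have h3 : ((‖A w‖ : ℂ) ^ 2 - ((m ^ 2 : ℝ) : ℂ) * (‖w‖ : ℂ) ^ 2) =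
          (((‖A w‖ ^ 2 - m ^ 2 * ‖w‖ ^ 2 : ℝ)) : ℂ) := by push_cast; ring
      rw [h3, Complex.ofReal_re]
      linarith
  have hupp : X ≤ algebraMap ℝ (H →L[ℂ] H) (M ^ 2) := by
    rw [ContinuousLinearMap.le_def]
    constructor
    · rw [Algebra.algebraMap_eq_smul_one]
      exact ((IsSelfAdjoint.smul (star_trivial _) (IsSelfAdjoint.one _)).sub hXsa).isSymmetric
    · intro w
      have h1 : ‖A w‖ ≤ M * ‖w‖ := (hAnorm w).2
      have h2 : ‖A w‖ ^ 2 ≤ M ^ 2 * ‖w‖ ^ 2 := by nlinarith [norm_nonneg w, norm_nonneg (A w)]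
      show 0 ≤ (inner ℂ ((algebraMap ℝ (H →L[ℂ] H) (M ^ 2) - X) w) w : ℂ).re
      rw [ContinuousLinearMap.sub_apply, inner_sub_left, Algebra.algebraMap_eq_smul_one]
      rw [hXinner w]
      have hsm : (inner ℂ (((M ^ 2 : ℝ) • (1 : H →L[ℂ] H)) w) w : ℂ) = (M ^ 2 : ℝ) * (‖w‖ : ℂ) ^ 2 := by
        simp only [ContinuousLinearMap.smul_apply, ContinuousLinearMap.one_apply]
        rw [RCLike.real_smul_eq_coe_smul (K := ℂ), inner_smul_left, inner_self_eq_norm_sq_to_K]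
        simp [Complex.real_smul]
      rw [hsm]
      have h3 : (((M ^ 2 : ℝ) : ℂ) * (‖w‖ : ℂ) ^ 2 - (‖A w‖ : ℂ) ^ 2) =
          (((M ^ 2 * ‖w‖ ^ 2 - ‖A w‖ ^ 2 : ℝ)) : ℂ) := by push_cast; ring
      rw [h3, Complex.ofReal_re]
      linarith
  -- spectrum bounds
  have hspec : spectrum ℝ X ⊆ Set.Icc (m ^ 2) (M ^ 2) := fun t ht =>
    ⟨(algebraMap_le_iff_le_spectrum (a := X) hXsa).mp hlow t ht,
     (le_algebraMap_iff_spectrum_le (a := X) hXsa).mp hupp t ht⟩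
  -- r is in the interval
  have hTinv' : ∀ w : H, (↑(T⁻¹) : H →L[ℂ] H) ((T : H →L[ℂ] H) w) = w := fun w =>
    DFunLike.congr_fun T.inv_mul w
  have hTx : (T : H →L[ℂ] H) x ≠ 0 := by
    intro h
    apply hx
    rw [← hTinv' x, h, map_zero]
  have hTxpos : 0 < ‖(T : H →L[ℂ] H) x‖ := norm_pos_iff.mpr hTx
  have hrmem : r ∈ Set.Icc (m ^ 2) (M ^ 2) := by
    obtain ⟨h1, h2⟩ := hTV x
    constructor
    · rw [hr, le_div_iff₀ (by positivity)]
      nlinarith [mul_self_le_mul_self (by positivity : (0:ℝ) ≤ m * ‖(T : H →L[ℂ] H) x‖) h1]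
    · rw [hr, div_le_iff₀ (by positivity)]
      nlinarith [mul_self_le_mul_self (norm_nonneg ((V : H →L[ℂ] H) x)) h2,
        norm_nonneg ((T : H →L[ℂ] H) x)]
  have hrI : r ∈ interior I := hsub hrmem
  have hrI' : r ∈ I := interior_subset hrI
  -- the affine minorant
  set c : ℝ := Φ r - r * φ r with hc
  set d : ℝ := φ r with hd
  have hΦcont : ContinuousOn Φ (spectrum ℝ X) :=
    hΦ.continuousOn_interior.mono (hspec.trans hsub)
  have hgle : cfc (fun t => c + d * t) X ≤ cfc Φ X := by
    apply cfc_mono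
    · intro t ht
      have htI : t ∈ I := interior_subset (hsub (hspec ht))
      have := hφ r hrI t htI
      simp only [hc, hd]
      linarith
    · exact (continuous_const.add (continuous_const.mul continuous_id)).continuousOn
    · exact hΦcont
  have hgX : cfc (fun t => c + d * t) X = algebraMap ℝ (H →L[ℂ] H) c + d • X := by
    rw [cfc_const_add c (fun t => d * t) X
      ((continuous_const.mul continuous_id).continuousOn) hXsa,
      cfc_const_mul_id d X hXsa]
  -- rewrite the perspective inner product
  set z : H := (T : H →L[ℂ] H) y with hz
  have hq : (inner ℂ ((qPersp Φ V T) y) y : ℂ) = inner ℂ ((cfc Φ X) z) z := by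
    show (inner ℂ ((star (T : H →L[ℂ] H) * cfc Φ X * (T : H →L[ℂ] H)) y) y : ℂ) = _
    rw [ContinuousLinearMap.mul_apply, ContinuousLinearMap.mul_apply,
      ContinuousLinearMap.star_eq_adjoint, ContinuousLinearMap.adjoint_inner_left]
  have hAz : A z = (V : H →L[ℂ] H) y := by
    rw [hz, hAapp, hTinv']
  -- order gives inequality on inner products
  have hpos := (ContinuousLinearMap.le_def _ _).mp hgle
  have hineq : 0 ≤ (inner ℂ ((cfc Φ X - cfc (fun t => c + d * t) X) z) z : ℂ).re := hpos.2 z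
  rw [ContinuousLinearMap.sub_apply, inner_sub_left] at hineq
  have hgz : (inner ℂ ((cfc (fun t => c + d * t) X) z) z : ℂ).re = c * ‖z‖ ^ 2 + d * ‖A z‖ ^ 2 := by
    rw [hgX, ContinuousLinearMap.add_apply, inner_add_left, Algebra.algebraMap_eq_smul_one]
    have hsm : (inner ℂ (((c : ℝ) • (1 : H →L[ℂ] H)) z) z : ℂ) = (c : ℝ) * (‖z‖ : ℂ) ^ 2 := by
      simp only [ContinuousLinearMap.smul_apply, ContinuousLinearMap.one_apply]
      rw [RCLike.real_smul_eq_coe_smul (K := ℂ), inner_smul_left, inner_self_eq_norm_sq_to_K]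
      simp [Complex.real_smul]
    have hsm2 : (inner ℂ (((d : ℝ) • X) z) z : ℂ) = (d : ℝ) * (‖A z‖ : ℂ) ^ 2 := by
      rw [ContinuousLinearMap.smul_apply, RCLike.real_smul_eq_coe_smul (K := ℂ),
        inner_smul_left, hXinner z]
      simp
    rw [hsm, hsm2]
    have : ((c : ℝ) : ℂ) * (‖z‖ : ℂ) ^ 2 + ((d : ℝ) : ℂ) * (‖A z‖ : ℂ) ^ 2 =
        ((c * ‖z‖ ^ 2 + d * ‖A z‖ ^ 2 : ℝ) : ℂ) := by push_cast; ring
    rw [this, Complex.ofReal_re]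
  rw [hq]
  have hfinal : (inner ℂ ((cfc (fun t => c + d * t) X) z) z : ℂ).re ≤
      (inner ℂ ((cfc Φ X) z) z : ℂ).re := by
    have := Complex.sub_re (inner ℂ ((cfc Φ X) z) z) (inner ℂ ((cfc (fun t => c + d * t) X) z) z)
    linarith [hineq, this.symm ▸ hineq]
  rw [hgz] at hfinal
  rw [hAz] at hfinal
  calc Φ r * ‖(T : H →L[ℂ] H) y‖ ^ 2 + φ r * (‖(V : H →L[ℂ] H) y‖ ^ 2 - r * ‖(T : H →L[ℂ] H) y‖ ^ 2)
      = c * ‖z‖ ^ 2 + d * ‖(V : H →L[ℂ] H) y‖ ^ 2 := by rw [hc, hd, hz]; ring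
    _ ≤ (inner ℂ ((cfc Φ X) z) z : ℂ).re := hfinal
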